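/- Let α, β, γ, ξ be real numbers and consider the functions x(t) = 1/(t + α), y(t) = β(t + α)^(−ξ), z(t) = (t + α)·(γ − β²(t + α)^(−2ξ)), defined for t with t + α > 0. Then (x, y, z) is a solution of the flow E₇: for all such t, x′(t) = −x(t)², y′(t) = −ξ x(t) y(t), and z′(t) = 2ξ y(t)² + x(t) z(t). Moreover along this solution H₇ = y x^(−ξ) = β and K₇ = z x + y² = γ. -/

import Mathlib

/-- Explicit solution of the continuous flow `E₇`: for `t + α > 0`, the
functions `x(t) = 1/(t+α)`, `y(t) = β(t+α)^(-ξ)`,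
`z(t) = (t+α)(γ - β²(t+α)^(-2ξ))` solve `ẋ = -x²`, `ẏ = -ξxy`,
`ż = 2ξy² + xz`, with `H₇ = y x^(-ξ) = β` and `K₇ = zx + y² = γ`. -/
theorem E7_explicit_solution (α β γ ξ : ℝ) :
    ∀ t : ℝ, t + α > 0 →
      HasDerivAt (fun s : ℝ => 1/(s + α)) (-(1/(t + α))^2) t ∧
      HasDerivAt (fun s : ℝ => β*(s + α)^(-ξ))
        (-ξ*(1/(t + α))*(β*(t + α)^(-ξ))) t ∧
      HasDerivAt (fun s : ℝ => (s + α)*(γ - β^2*(s + α)^(-(2*ξ))))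
        (2*ξ*(β*(t + α)^(-ξ))^2 +
          (1/(t + α))*((t + α)*(γ - β^2*(t + α)^(-(2*ξ))))) t ∧
      (β*(t + α)^(-ξ)) * (1/(t + α))^(-ξ) = β ∧
      ((t + α)*(γ - β^2*(t + α)^(-(2*ξ)))) * (1/(t + α)) +
        (β*(t + α)^(-ξ))^2 = γ := by
  intro t ht
  have hne : t + α ≠ 0 := ne_of_gt ht
  have hbase : HasDerivAt (fun s : ℝ => s + α) 1 t := (hasDerivAt_id t).add_const α
  have hsplit : ∀ p : ℝ, (t + α) ^ (p - 1) = (t + α) ^ p / (t + α) := by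
    intro p
    rw [Real.rpow_sub ht, Real.rpow_one]
  have h2 : (β*(t + α)^(-ξ))^2 = β^2 * (t + α)^(-(2*ξ)) := by
    rw [mul_pow, sq ((t + α)^(-ξ)), ← Real.rpow_add ht]
    ring_nf
  have hx : HasDerivAt (fun s : ℝ => 1/(s + α)) (-(1/(t + α))^2) t := by
    have h := hbase.inv hne
    simp only [one_div]
    refine h.congr_deriv ?_
    symm
    field_simp
  refine ⟨hx, ?_, ?_, ?_, ?_⟩
  · have h := (hbase.rpow_const (p := -ξ) (Or.inl hne)).const_mul β
    refine h.congr_deriv ?_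
    symm
    rw [hsplit, div_eq_mul_inv]
    ring
  · have h1 := (hbase.rpow_const (p := -(2*ξ)) (Or.inl hne)).const_mul (β^2)
    have hp := (hasDerivAt_const t γ).sub h1
    have h := hbase.mul hp
    refine h.congr_deriv ?_
    symm
    rw [hsplit, h2, Pi.sub_apply]
    field_simp
    ring
  · rw [one_div, Real.inv_rpow ht.le, ← Real.rpow_neg ht.le, neg_neg,
      mul_assoc, ← Real.rpow_add ht]
    simp
  · rw [h2]
    field_simp
    ring
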